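/- The group with presentation ⟨v, h ∣ v² = 1, h² = 1, vhv = hvh⟩ is isomorphic to the symmetric group on three symbols (equivalently, the dihedral group of the triangle). That is, there is a group isomorphism from this presented group to Equiv.Perm (Fin 3). -/

import Mathlib

/-- The generator `v` (vertical dualization) as an element of the free group. -/
def vGen : FreeGroup (Fin 2) := FreeGroup.of 0

/-- The generator `h` (horizontal dualization) as an element of the free group. -/
def hGen : FreeGroup (Fin 2) := FreeGroup.of 1

/-- Relators for the group ⟨v, h ∣ v² = 1, h² = 1, vhv = hvh⟩. -/
def rels2 : Set (FreeGroup (Fin 2)) :=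
  {vGen ^ 2, hGen ^ 2, (vGen * hGen * vGen) * (hGen * vGen * hGen)⁻¹}

namespace TwoDualsAux

/-- The target map of the generators. -/
def fTo : Fin 2 → Equiv.Perm (Fin 3) := ![Equiv.swap 0 1, Equiv.swap 1 2]

theorem hrels : ∀ r ∈ rels2, FreeGroup.lift fTo r = 1 := by
  intro r hr
  rcases hr with h | h | h <;> subst h <;>
    simp only [vGen, hGen, map_mul, map_pow, map_inv, FreeGroup.lift_apply_of, fTo] <;> decide

/-- The homomorphism from the presented group to `Perm (Fin 3)`. -/
def φ : PresentedGroup rels2 →* Equiv.Perm (Fin 3) := PresentedGroup.toGroup hrels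

local notation "V" => (PresentedGroup.of 0 : PresentedGroup rels2)
local notation "H" => (PresentedGroup.of 1 : PresentedGroup rels2)

theorem mk_rel_one {r : FreeGroup (Fin 2)} (hr : r ∈ rels2) :
    PresentedGroup.mk rels2 r = 1 := by
  have := (QuotientGroup.eq_one_iff r).2 (Subgroup.subset_normalClosure hr)
  exact this

theorem hVV : V * V = 1 := by
  have := mk_rel_one (r := vGen ^ 2) (by left; rfl)
  rwa [pow_two, map_mul] at this

theorem hHH : H * H = 1 := by
  have := mk_rel_one (r := hGen ^ 2) (by right; left; rfl)
  rwa [pow_two, map_mul] at this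

theorem hVHV : V * H * V = H * V * H := by
  have := mk_rel_one (r := (vGen * hGen * vGen) * (hGen * vGen * hGen)⁻¹)
    (by right; right; rfl)
  simp only [map_mul, map_inv] at this
  exact mul_inv_eq_one.mp this

/-- Every element of the presented group is one of six elements. -/
theorem mem_six (g : PresentedGroup rels2) :
    g = 1 ∨ g = V ∨ g = H ∨ g = V * H ∨ g = H * V ∨ g = V * H * V := by
  have hg : g ∈ Subgroup.closure (Set.range (PresentedGroup.of : Fin 2 → PresentedGroup rels2)) := by
    rw [PresentedGroup.closure_range_of]; trivial
  have key : ∀ (x : PresentedGroup rels2),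
      (x = 1 ∨ x = V ∨ x = H ∨ x = V * H ∨ x = H * V ∨ x = V * H * V) →
      ∀ i : Fin 2, (x * PresentedGroup.of i = 1 ∨ x * PresentedGroup.of i = V ∨
        x * PresentedGroup.of i = H ∨ x * PresentedGroup.of i = V * H ∨
        x * PresentedGroup.of i = H * V ∨ x * PresentedGroup.of i = V * H * V) := by
    intro x hx i
    have hi : i = 0 ∨ i = 1 := by omega
    rcases hi with rfl | rfl <;> rcases hx with h|h|h|h|h|h <;> subst h
    · right; left; rw [one_mul]
    · left; exact hVV
    · right; right; right; right; left; rfl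
    · right; right; right; right; right; rfl
    · right; right; left; rw [mul_assoc, hVV, mul_one]
    · right; right; right; left
      rw [mul_assoc, mul_assoc, hVV, mul_one]
    · right; right; left; rw [one_mul]
    · right; right; right; left; rfl
    · left; exact hHH
    · right; left; rw [mul_assoc, hHH, mul_one]
    · right; right; right; right; right; exact hVHV.symm
    · right; right; right; right; left
      rw [hVHV, mul_assoc, mul_assoc, hHH, mul_one]
  have hinv : ∀ i : Fin 2,
      (PresentedGroup.of i : PresentedGroup rels2)⁻¹ = PresentedGroup.of i := by
    intro i
    have hi : i = 0 ∨ i = 1 := by omega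
    rcases hi with rfl | rfl
    · exact inv_eq_of_mul_eq_one_right hVV
    · exact inv_eq_of_mul_eq_one_right hHH
  induction hg using Subgroup.closure_induction_right with
  | one => left; rfl
  | mul_right x hx y hy ih =>
      obtain ⟨i, rfl⟩ := hy
      exact key x ih i
  | mul_inv_cancel x hx y hy ih =>
      obtain ⟨i, rfl⟩ := hy
      rw [hinv i]
      exact key x ih i

theorem φ_surjective : Function.Surjective φ := by
  have hV : φ V = Equiv.swap 0 1 := PresentedGroup.toGroup.of hrels
  have hH : φ H = Equiv.swap 1 2 := PresentedGroup.toGroup.of hrels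
  intro σ
  have h6 : σ = 1 ∨ σ = Equiv.swap 0 1 ∨ σ = Equiv.swap 1 2 ∨
      σ = Equiv.swap 0 1 * Equiv.swap 1 2 ∨ σ = Equiv.swap 1 2 * Equiv.swap 0 1 ∨
      σ = Equiv.swap 0 1 * Equiv.swap 1 2 * Equiv.swap 0 1 := by
    revert σ; decide
  rcases h6 with h|h|h|h|h|h <;> subst h
  · exact ⟨1, map_one φ⟩
  · exact ⟨V, hV⟩
  · exact ⟨H, hH⟩
  · exact ⟨V * H, by rw [map_mul, hV, hH]⟩
  · exact ⟨H * V, by rw [map_mul, hV, hH]⟩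
  · exact ⟨V * H * V, by rw [map_mul, map_mul, hV, hH]⟩

/-- A surjection from `Fin 6` onto the presented group. -/
def six : Fin 6 → PresentedGroup rels2 := ![1, V, H, V * H, H * V, V * H * V]

theorem six_surjective : Function.Surjective six := by
  intro g
  rcases mem_six g with h|h|h|h|h|h
  · exact ⟨0, h.symm⟩
  · exact ⟨1, h.symm⟩
  · exact ⟨2, h.symm⟩
  · exact ⟨3, h.symm⟩
  · exact ⟨4, h.symm⟩
  · exact ⟨5, h.symm⟩

instance : Finite (PresentedGroup rels2) := Finite.of_surjective six six_surjective

theorem card_eq : Nat.card (PresentedGroup rels2) = 6 := by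
  have h1 : Nat.card (PresentedGroup rels2) ≤ 6 := by
    have := Nat.card_le_card_of_surjective six six_surjective
    simpa using this
  have h2 : 6 ≤ Nat.card (PresentedGroup rels2) := by
    have := Nat.card_le_card_of_surjective φ φ_surjective
    simpa [Fintype.card_perm, Nat.factorial] using this
  omega

theorem φ_bijective : Function.Bijective φ := by
  rw [Nat.bijective_iff_surjective_and_card]
  refine ⟨φ_surjective, ?_⟩
  rw [card_eq]
  simp [Nat.card_eq_fintype_card, Fintype.card_perm, Nat.factorial]

end TwoDualsAux

/-- The group ⟨v, h ∣ v² = 1, h² = 1, vhv = hvh⟩ of dualization operations on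
double vector bundles is isomorphic to the symmetric group on three symbols. -/
theorem presentedGroup_two_duals_iso_perm_fin_three :
    Nonempty (PresentedGroup rels2 ≃* Equiv.Perm (Fin 3)) := by
  exact ⟨MulEquiv.ofBijective TwoDualsAux.φ TwoDualsAux.φ_bijective⟩
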